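/- Let C₀, C, M be real constants with C₀ ≥ 0, C > 0, M ≥ 1, and let 0 < α < 1. Let f : ℕ → ℝ≥0 satisfy f(m) ≤ C·m^α for all m ≥ 1, and let T : ℕ → ℝ≥0 satisfy T(1) ≤ C₀ and, for all n > 1, T(n) ≤ max_{1 ≤ i ≤ n−1} ( T(i) + T(n−i) + M·f(min(i, n−i)) ). Then there exists a constant C′ (depending only on C₀, C, α) such that T(n) ≤ C′·M·n for all n ≥ 1; in fact T(n) ≤ (C₀ + C/(1 − 2^(α−1)))·M·n. -/

import Mathlib

private lemma alpha_le_two_rpow {α : ℝ} (hα0 : 0 < α) (hα1 : α < 1) :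
    α ≤ (2 : ℝ) ^ (α - 1) := by
  have hlog : Real.log 2 ≤ 1 := by
    have := Real.log_le_sub_one_of_pos (by norm_num : (0:ℝ) < 2)
    linarith
  have h1 : Real.log 2 * (α - 1) ≥ (α - 1) := by
    nlinarith [Real.log_pos (by norm_num : (1:ℝ) < 2)]
  have h2 : (2 : ℝ) ^ (α - 1) = Real.exp (Real.log 2 * (α - 1)) := by
    rw [Real.rpow_def_of_pos (by norm_num : (0:ℝ) < 2)]
  have h3 := Real.add_one_le_exp (Real.log 2 * (α - 1))
  rw [h2]; linarith

private lemma key_rpow {α : ℝ} (hα0 : 0 < α) (hα1 : α < 1)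
    {m x : ℝ} (hm : 0 < m) (hmx : m ≤ x) :
    (x + m) ^ α ≤ x ^ α + (2 : ℝ) ^ (α - 1) * m ^ α := by
  have hx : 0 < x := lt_of_lt_of_le hm hmx
  have hdiv : (0:ℝ) ≤ m / x := le_of_lt (div_pos hm hx)
  have h1 : (x + m) ^ α = x ^ α * (1 + m / x) ^ α := by
    rw [← Real.mul_rpow (le_of_lt hx) (by linarith)]
    rw [mul_add, mul_one, mul_div_cancel₀ _ (ne_of_gt hx)]
  have h2 : (1 + m / x) ^ α ≤ 1 + α * (m / x) :=
    rpow_one_add_le_one_add_mul_self (by linarith) (le_of_lt hα0) (le_of_lt hα1)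
  have h3 : (x + m) ^ α ≤ x ^ α + α * (x ^ (α - 1) * m) := by
    rw [h1]
    have := mul_le_mul_of_nonneg_left h2 (Real.rpow_nonneg (le_of_lt hx) α)
    calc x ^ α * (1 + m / x) ^ α ≤ x ^ α * (1 + α * (m / x)) := this
      _ = x ^ α + α * (x ^ (α - 1) * m) := by
          rw [Real.rpow_sub_one (ne_of_gt hx)]
          field_simp
  have h4 : x ^ (α - 1) * m ≤ m ^ α := by
    have hle : x ^ (α - 1) ≤ m ^ (α - 1) :=
      Real.rpow_le_rpow_of_nonpos hm hmx (by linarith)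
    calc x ^ (α - 1) * m ≤ m ^ (α - 1) * m :=
          mul_le_mul_of_nonneg_right hle (le_of_lt hm)
      _ = m ^ α := by
          rw [Real.rpow_sub_one (ne_of_gt hm)]
          field_simp
  have h5 : α * (x ^ (α - 1) * m) ≤ (2:ℝ) ^ (α - 1) * m ^ α := by
    have halm := alpha_le_two_rpow hα0 hα1
    have hmα : (0:ℝ) ≤ m ^ α := Real.rpow_nonneg (le_of_lt hm) α
    have : α * (x ^ (α - 1) * m) ≤ α * m ^ α :=
      mul_le_mul_of_nonneg_left h4 (le_of_lt hα0)
    nlinarith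
  linarith

/-- The recursive inequality `T(n) ≤ max_{1 ≤ i ≤ n-1} (T(i) + T(n-i) + M·f(min(i, n-i)))`
with `f(m) ≤ C·m^α` (for `0 < α < 1`) implies `T(n) ≤ (C₀ + C/(1 - 2^(α-1)))·M·n`. -/
theorem recursive_inequality_linear
    (C₀ C M α : ℝ) (hC₀ : 0 ≤ C₀) (hC : 0 < C) (hM : 1 ≤ M)
    (hα0 : 0 < α) (hα1 : α < 1)
    (f T : ℕ → ℝ)
    (hf0 : ∀ m, 0 ≤ f m) (hT0 : ∀ n, 0 ≤ T n)
    (hf : ∀ m, 1 ≤ m → f m ≤ C * (m : ℝ) ^ α)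
    (hT1 : T 1 ≤ C₀)
    (hrec : ∀ n, 1 < n → ∀ hne : (Finset.Icc 1 (n - 1)).Nonempty,
      T n ≤ (Finset.Icc 1 (n - 1)).sup' hne
        (fun i => T i + T (n - i) + M * f (min i (n - i)))) :
    (∃ C' : ℝ, ∀ n, 1 ≤ n → T n ≤ C' * M * n) ∧
    (∀ n, 1 ≤ n → T n ≤ (C₀ + C / (1 - (2 : ℝ) ^ (α - 1))) * M * n) := by
  have hM0 : (0:ℝ) < M := lt_of_lt_of_le one_pos hM
  have h2lt : (2:ℝ) ^ (α - 1) < 1 :=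
    Real.rpow_lt_one_of_one_lt_of_neg (by norm_num) (by linarith)
  set D : ℝ := 1 - (2:ℝ) ^ (α - 1) with hD_def
  have hD : 0 < D := by simp only [hD_def]; linarith
  set b : ℝ := C / D with hb_def
  have hb : 0 < b := div_pos hC hD
  have hbD : b * D = C := div_mul_cancel₀ C (ne_of_gt hD)
  set K : ℝ := C₀ + b with hK_def
  -- main induction
  have main : ∀ n : ℕ, 1 ≤ n → T n ≤ M * (K * n - b * (n:ℝ) ^ α) := by
    intro n
    induction n using Nat.strong_induction_on with
    | _ n ih =>
      intro hn
      rcases eq_or_lt_of_le hn with h1 | h1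
      · -- n = 1
        subst h1
        simp only [Nat.cast_one, Real.one_rpow, mul_one]
        have : K - b = C₀ := by simp [hK_def]
        rw [this]
        calc T 1 ≤ C₀ := hT1
          _ ≤ M * C₀ := le_mul_of_one_le_left hC₀ hM
      · -- n > 1
        have hne : (Finset.Icc 1 (n - 1)).Nonempty := by
          refine ⟨1, Finset.mem_Icc.mpr ⟨le_refl 1, ?_⟩⟩
          omega
        refine (hrec n h1 hne).trans (Finset.sup'_le hne _ ?_)
        intro i hi
        rw [Finset.mem_Icc] at hi
        obtain ⟨hi1, hi2⟩ := hi
        have hin : i < n := by omega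
        set j := n - i with hj_def
        have hj1 : 1 ≤ j := by omega
        have hjn : j < n := by omega
        have hij : i + j = n := by omega
        -- casts
        have hcast : (i:ℝ) + (j:ℝ) = (n:ℝ) := by exact_mod_cast congrArg (Nat.cast : ℕ → ℝ) hij
        have hTi := ih i hin hi1
        have hTj := ih j hjn hj1
        have hmin1 : 1 ≤ min i j := le_min hi1 hj1
        have hfmin := hf (min i j) hmin1
        -- key inequality: (i:ℝ)^α + (j:ℝ)^α - n^α ≥ D * (min i j : ℝ)^α
        have hkey : D * ((min i j : ℕ):ℝ) ^ α ≤ (i:ℝ) ^ α + (j:ℝ) ^ α - (n:ℝ) ^ α := by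
          rcases le_total i j with hle | hle
          · have hmin : min i j = i := min_eq_left hle
            rw [hmin]
            have hi0 : (0:ℝ) < i := by exact_mod_cast hi1
            have hle' : (i:ℝ) ≤ (j:ℝ) := by exact_mod_cast hle
            have := key_rpow hα0 hα1 hi0 hle'
            have hn_eq : (n:ℝ) = (j:ℝ) + (i:ℝ) := by linarith
            rw [hn_eq]
            simp only [hD_def]
            nlinarith [Real.rpow_nonneg (le_of_lt hi0) α]
          · have hmin : min i j = j := min_eq_right hle
            rw [hmin]
            have hj0 : (0:ℝ) < j := by exact_mod_cast hj1
            have hle' : (j:ℝ) ≤ (i:ℝ) := by exact_mod_cast hle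
            have := key_rpow hα0 hα1 hj0 hle'
            have hn_eq : (n:ℝ) = (i:ℝ) + (j:ℝ) := by linarith
            rw [hn_eq]
            simp only [hD_def]
            nlinarith [Real.rpow_nonneg (le_of_lt hj0) α]
        -- combine
        have hmα_nonneg : (0:ℝ) ≤ ((min i j : ℕ):ℝ) ^ α :=
          Real.rpow_nonneg (by positivity) α
        have hC_le : C * ((min i j : ℕ):ℝ) ^ α ≤ b * ((i:ℝ) ^ α + (j:ℝ) ^ α - (n:ℝ) ^ α) := by
          calc C * ((min i j : ℕ):ℝ) ^ α = b * (D * ((min i j : ℕ):ℝ) ^ α) := by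
                rw [← mul_assoc, hbD]
            _ ≤ b * ((i:ℝ) ^ α + (j:ℝ) ^ α - (n:ℝ) ^ α) :=
                mul_le_mul_of_nonneg_left hkey (le_of_lt hb)
        have hMf : M * f (min i j) ≤ M * (b * ((i:ℝ) ^ α + (j:ℝ) ^ α - (n:ℝ) ^ α)) :=
          mul_le_mul_of_nonneg_left (hfmin.trans hC_le) (le_of_lt hM0)
        calc T i + T (n - i) + M * f (min i (n - i))
            = T i + T j + M * f (min i j) := rfl
          _ ≤ M * (K * i - b * (i:ℝ) ^ α) + M * (K * j - b * (j:ℝ) ^ α)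
              + M * (b * ((i:ℝ) ^ α + (j:ℝ) ^ α - (n:ℝ) ^ α)) := by
              exact add_le_add (add_le_add hTi hTj) hMf
          _ = M * (K * ((i:ℝ) + (j:ℝ)) - b * (n:ℝ) ^ α) := by ring
          _ = M * (K * (n:ℝ) - b * (n:ℝ) ^ α) := by rw [hcast]
  -- conclude
  have final : ∀ n : ℕ, 1 ≤ n → T n ≤ (C₀ + C / (1 - (2:ℝ) ^ (α - 1))) * M * n := by
    intro n hn
    have h := main n hn
    have hn0 : (0:ℝ) < n := by exact_mod_cast hn
    have hnα : (0:ℝ) ≤ (n:ℝ) ^ α := Real.rpow_nonneg (le_of_lt hn0) α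
    have : M * (K * n - b * (n:ℝ) ^ α) ≤ K * M * n := by
      have h1 : M * (K * n - b * (n:ℝ) ^ α) ≤ M * (K * n) :=
        mul_le_mul_of_nonneg_left (by nlinarith [mul_nonneg (le_of_lt hb) hnα]) (le_of_lt hM0)
      linarith [h1, (by ring : M * (K * (n:ℝ)) = K * M * n)]
    have hKC : K = C₀ + C / (1 - (2:ℝ) ^ (α - 1)) := by rw [hK_def, hb_def, hD_def]
    linarith [hKC ▸ (h.trans this)]
  exact ⟨⟨C₀ + C / (1 - (2:ℝ) ^ (α - 1)), final⟩, final⟩
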